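/- arXiv:2510.22393 — 2 statements merged into one kernel-verified Lean document; each statement's English description precedes it below -/
import Mathlib

section
/- Let A be an n×n real symmetric matrix with largest eigenvalue λ₁, E an n×n real matrix, T > 0, and x₁ a real number with x₁ > λ₁. Then ∫_{−T}^{T} ‖((x₁+it)I − A)⁻¹ E ((x₁+it)I − A)⁻¹‖ dt ≤ 4‖E‖/(x₁ − λ₁). -/
open Matrix
open scoped Matrix.Norms.L2Operator

lemma l2norm_le_of_bound {𝕜 : Type*} [RCLike 𝕜] {m n : ℕ} (M : Matrix (Fin m) (Fin n) 𝕜)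
    {c : ℝ} (hc : 0 ≤ c)
    (h : ∀ v : EuclideanSpace 𝕜 (Fin n),
      ‖(EuclideanSpace.equiv (Fin m) 𝕜).symm (M *ᵥ v)‖ ≤ c * ‖v‖) : ‖M‖ ≤ c := by
  rw [Matrix.l2_opNorm_def]
  exact ContinuousLinearMap.opNorm_le_bound _ hc fun x => h x

lemma l2norm_diagonal_le {n : ℕ} (g : Fin n → ℂ) {c : ℝ} (hc : 0 ≤ c)
    (h : ∀ i, ‖g i‖ ≤ c) : ‖Matrix.diagonal g‖ ≤ c := by
  apply l2norm_le_of_bound _ hc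
  intro v
  have h1 : ‖(EuclideanSpace.equiv (Fin n) ℂ).symm (Matrix.diagonal g *ᵥ v)‖
      = Real.sqrt (∑ i, ‖g i * v i‖ ^ 2) := by
    rw [EuclideanSpace.norm_eq]
    congr 1
    apply Finset.sum_congr rfl
    intro i _
    congr 1
    simp [Matrix.mulVec_diagonal]
  rw [h1]
  have h2 : ∑ i, ‖g i * v i‖ ^ 2 ≤ c ^ 2 * ∑ i, ‖v i‖ ^ 2 := by
    rw [Finset.mul_sum]
    apply Finset.sum_le_sum
    intro i _
    rw [norm_mul, mul_pow]
    gcongr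
    exact h i
  calc Real.sqrt (∑ i, ‖g i * v i‖ ^ 2) ≤ Real.sqrt (c ^ 2 * ∑ i, ‖v i‖ ^ 2) :=
        Real.sqrt_le_sqrt h2
    _ = c * ‖v‖ := by
        rw [Real.sqrt_mul (sq_nonneg c), Real.sqrt_sq hc, EuclideanSpace.norm_eq]

lemma l2norm_map_ofReal_le {m n : ℕ} (E : Matrix (Fin m) (Fin n) ℝ) :
    ‖E.map Complex.ofReal‖ ≤ ‖E‖ := by
  apply l2norm_le_of_bound _ (norm_nonneg E)
  intro v
  set x : EuclideanSpace ℝ (Fin n) := (EuclideanSpace.equiv (Fin n) ℝ).symm (fun k => (v k).re)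
  set y : EuclideanSpace ℝ (Fin n) := (EuclideanSpace.equiv (Fin n) ℝ).symm (fun k => (v k).im)
  have hre : ∀ j, ((E.map Complex.ofReal *ᵥ v) j).re = (E *ᵥ x) j := by
    intro j
    simp only [Matrix.mulVec, dotProduct, Matrix.map_apply, Complex.re_sum,
      Complex.re_ofReal_mul]
    rfl
  have him : ∀ j, ((E.map Complex.ofReal *ᵥ v) j).im = (E *ᵥ y) j := by
    intro j
    simp only [Matrix.mulVec, dotProduct, Matrix.map_apply, Complex.im_sum,
      Complex.im_ofReal_mul]
    rfl
  have key : ‖(EuclideanSpace.equiv (Fin m) ℂ).symm (E.map Complex.ofReal *ᵥ v)‖ ^ 2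
      ≤ (‖E‖ * ‖v‖) ^ 2 := by
    have lhs_eq : ‖(EuclideanSpace.equiv (Fin m) ℂ).symm (E.map Complex.ofReal *ᵥ v)‖ ^ 2
        = ‖(EuclideanSpace.equiv (Fin m) ℝ).symm (E *ᵥ x)‖ ^ 2
          + ‖(EuclideanSpace.equiv (Fin m) ℝ).symm (E *ᵥ y)‖ ^ 2 := by
      rw [EuclideanSpace.norm_eq, EuclideanSpace.norm_eq, EuclideanSpace.norm_eq,
        Real.sq_sqrt (by positivity), Real.sq_sqrt (by positivity),
        Real.sq_sqrt (by positivity), ← Finset.sum_add_distrib]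
      apply Finset.sum_congr rfl
      intro j _
      have : ((EuclideanSpace.equiv (Fin m) ℂ).symm (E.map Complex.ofReal *ᵥ v)) j
          = (E.map Complex.ofReal *ᵥ v) j := rfl
      rw [this]
      rw [Complex.sq_norm, Complex.normSq_apply, hre j, him j]
      simp [Real.norm_eq_abs, sq_abs]
      ring
    have hv_eq : ‖v‖ ^ 2 = ‖x‖ ^ 2 + ‖y‖ ^ 2 := by
      rw [EuclideanSpace.norm_eq, EuclideanSpace.norm_eq, EuclideanSpace.norm_eq,
        Real.sq_sqrt (by positivity), Real.sq_sqrt (by positivity),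
        Real.sq_sqrt (by positivity), ← Finset.sum_add_distrib]
      apply Finset.sum_congr rfl
      intro k _
      rw [Complex.sq_norm, Complex.normSq_apply]
      simp [x, y, Real.norm_eq_abs, sq_abs]
      ring
    rw [lhs_eq, mul_pow, hv_eq, mul_add]
    have hx := E.l2_opNorm_mulVec x
    have hy := E.l2_opNorm_mulVec y
    apply add_le_add
    · nlinarith [hx, norm_nonneg x, norm_nonneg ((EuclideanSpace.equiv (Fin m) ℝ).symm (E *ᵥ x)), norm_nonneg E]
    · nlinarith [hy, norm_nonneg y, norm_nonneg ((EuclideanSpace.equiv (Fin m) ℝ).symm (E *ᵥ y)), norm_nonneg E]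
  have h1 : (0:ℝ) ≤ ‖E‖ * ‖v‖ := by positivity
  nlinarith [norm_nonneg ((EuclideanSpace.equiv (Fin m) ℂ).symm (E.map Complex.ofReal *ᵥ v))]


/-- The spectral norm (ℓ²→ℓ² operator norm) of a matrix. -/
noncomputable def specNorm {𝕜 : Type*} [RCLike 𝕜] {m n : ℕ}
    (M : Matrix (Fin m) (Fin n) 𝕜) : ℝ :=
  ‖LinearMap.toContinuousLinearMap (Matrix.toEuclideanLin M)‖

/-- The resolvent `(zI − A)⁻¹` of a real matrix `A`, regarded as a complex matrix. -/
noncomputable def res {n : ℕ} (A : Matrix (Fin n) (Fin n) ℝ) (z : ℂ) :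
    Matrix (Fin n) (Fin n) ℂ :=
  (z • (1 : Matrix (Fin n) (Fin n) ℂ) - A.map Complex.ofReal)⁻¹


lemma specNorm_eq {𝕜 : Type*} [RCLike 𝕜] {m n : ℕ} (M : Matrix (Fin m) (Fin n) 𝕜) :
    specNorm M = ‖M‖ := rfl

/-- **Bound on the right vertical segment `M₃`** (Lemma 4.3 of the paper).
Indices are 1-based, so `lam 1` is the largest eigenvalue of `A`. -/
theorem M3_bound
    {n : ℕ} (hn : 1 ≤ n) (A E : Matrix (Fin n) (Fin n) ℝ) (hA : A.IsSymm)
    (lam : ℕ → ℝ) (u : ℕ → (Fin n → ℝ))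
    (hlam_mono : ∀ i ∈ Finset.Icc 1 n, ∀ j ∈ Finset.Icc 1 n, i ≤ j → lam j ≤ lam i)
    (hu_on : ∀ i ∈ Finset.Icc 1 n, ∀ j ∈ Finset.Icc 1 n,
      u i ⬝ᵥ u j = if i = j then 1 else 0)
    (hu_eig : ∀ i ∈ Finset.Icc 1 n, A *ᵥ u i = lam i • u i)
    (T : ℝ) (hT : 0 < T) (x₁ : ℝ) (hx₁ : lam 1 < x₁) :
    (∫ t in (-T)..T, specNorm
      (res A (x₁ + t * Complex.I) * E.map Complex.ofReal
        * res A (x₁ + t * Complex.I)))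
      ≤ 4 * specNorm E / (x₁ - lam 1) := by
  set U : Matrix (Fin n) (Fin n) ℝ := Matrix.of fun i j => u (j.1 + 1) i with hU
  have hmem : ∀ i : Fin n, i.1 + 1 ∈ Finset.Icc 1 n := by
    intro i; simp [Finset.mem_Icc]
  have h1 : Uᵀ * U = 1 := by
    ext i j
    have := hu_on (i.1+1) (hmem i) (j.1+1) (hmem j)
    simp only [Matrix.mul_apply, Matrix.transpose_apply, Matrix.one_apply, hU, Matrix.of_apply]
    rw [show (∑ k, u (i.1+1) k * u (j.1+1) k) = u (i.1+1) ⬝ᵥ u (j.1+1) from rfl, this]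
    congr 1
    simp only [eq_iff_iff]
    constructor
    · intro h; exact Fin.ext (by omega)
    · intro h; rw [h]
  have h2 : U * Uᵀ = 1 := mul_eq_one_comm.mp h1
  have h3 : A * U = U * Matrix.diagonal (fun i : Fin n => lam (i.1+1)) := by
    ext i j
    have heig := congrFun (hu_eig (j.1+1) (hmem j)) i
    simp only [Matrix.mulVec, dotProduct, Pi.smul_apply, smul_eq_mul] at heig
    rw [Matrix.mul_diagonal]
    simp only [Matrix.mul_apply, hU, Matrix.of_apply]
    rw [heig]
    ring
  have hArep : A = U * Matrix.diagonal (fun i : Fin n => lam (i.1+1)) * Uᵀ := by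
    calc A = A * (U * Uᵀ) := by rw [h2, Matrix.mul_one]
      _ = (A * U) * Uᵀ := by rw [Matrix.mul_assoc]
      _ = _ := by rw [h3]
  -- complex side
  set Uc : Matrix (Fin n) (Fin n) ℂ := U.map Complex.ofReal with hUc
  set lamC : Fin n → ℂ := fun i => (lam (i.1+1) : ℂ) with hlamC
  have hmapmul : ∀ (M N : Matrix (Fin n) (Fin n) ℝ),
      (M * N).map Complex.ofReal = M.map Complex.ofReal * N.map Complex.ofReal := by
    intro M N
    exact Matrix.map_mul (f := Complex.ofRealHom)
  have hUcT : Ucᵀ = Uᵀ.map Complex.ofReal := (Matrix.transpose_map).symm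
  have hUc1 : Ucᵀ * Uc = 1 := by
    rw [hUcT, hUc, ← hmapmul, h1, Matrix.map_one _ Complex.ofReal_zero Complex.ofReal_one]
  have hUc2 : Uc * Ucᵀ = 1 := by
    rw [hUcT, hUc, ← hmapmul, h2, Matrix.map_one _ Complex.ofReal_zero Complex.ofReal_one]
  have hAc : A.map Complex.ofReal = Uc * Matrix.diagonal lamC * Ucᵀ := by
    rw [hArep, hmapmul, hmapmul, hUcT, Matrix.diagonal_map Complex.ofReal_zero]
  have hresolv : ∀ z : ℂ, (∀ i : Fin n, z - lamC i ≠ 0) →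
      res A z = Uc * Matrix.diagonal (fun i => (z - lamC i)⁻¹) * Ucᵀ := by
    intro z hz
    have hB : z • (1 : Matrix (Fin n) (Fin n) ℂ) - A.map Complex.ofReal
        = Uc * Matrix.diagonal (fun i => z - lamC i) * Ucᵀ := by
      have hd : Matrix.diagonal (fun i : Fin n => z - lamC i)
          = Matrix.diagonal (fun _ : Fin n => z) - Matrix.diagonal lamC := by
        rw [Matrix.diagonal_sub]
      rw [hd, Matrix.mul_sub, Matrix.sub_mul, hAc, ← Matrix.smul_one_eq_diagonal]
      congr 1
      symm
      calc Uc * (z • (1 : Matrix (Fin n) (Fin n) ℂ)) * Ucᵀ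
          = z • (Uc * 1 * Ucᵀ) := by
            rw [Matrix.mul_smul, Matrix.smul_mul]
        _ = z • (1 : Matrix (Fin n) (Fin n) ℂ) := by rw [Matrix.mul_one, hUc2]
    rw [res, hB]
    apply Matrix.inv_eq_right_inv
    calc (Uc * Matrix.diagonal (fun i => z - lamC i) * Ucᵀ)
          * (Uc * Matrix.diagonal (fun i => (z - lamC i)⁻¹) * Ucᵀ)
        = Uc * (Matrix.diagonal (fun i => z - lamC i) * ((Ucᵀ * Uc)
            * (Matrix.diagonal (fun i => (z - lamC i)⁻¹) * Ucᵀ))) := by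
          simp only [Matrix.mul_assoc]
      _ = Uc * ((Matrix.diagonal (fun i => z - lamC i)
            * Matrix.diagonal (fun i => (z - lamC i)⁻¹)) * Ucᵀ) := by
          rw [hUc1, Matrix.one_mul, Matrix.mul_assoc]
      _ = Uc * Ucᵀ := by
          rw [Matrix.diagonal_mul_diagonal,
            show (fun i => (z - lamC i) * (z - lamC i)⁻¹) = fun _ : Fin n => (1:ℂ) from
              funext fun i => mul_inv_cancel₀ (hz i),
            Matrix.diagonal_one, Matrix.one_mul]
      _ = 1 := hUc2
  -- norms
  haveI : NeZero n := ⟨by omega⟩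
  have hnorm_one : ‖(1 : Matrix (Fin n) (Fin n) ℂ)‖ = 1 := by
    rw [Matrix.cstar_norm_def, _root_.map_one]
    rw [ContinuousLinearMap.one_def]
    exact ContinuousLinearMap.norm_id
  have hcT : Ucᴴ = Ucᵀ := by
    ext i j
    simp [Matrix.conjTranspose_apply, Matrix.map_apply, hUc, Complex.conj_ofReal]
  have hnormUc : ‖Uc‖ = 1 := by
    have h := CStarRing.norm_star_mul_self (x := Uc)
    rw [Matrix.star_eq_conjTranspose, hcT, hUc1, hnorm_one] at h
    nlinarith [norm_nonneg Uc]
  have hnormUcT : ‖Ucᵀ‖ = 1 := by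
    rw [← hcT, Matrix.l2_opNorm_conjTranspose, hnormUc]
  -- analytic part
  set a : ℝ := x₁ - lam 1 with ha_def
  have ha : 0 < a := by simp only [ha_def]; linarith
  have hlam_le : ∀ i : Fin n, lam (i.1+1) ≤ lam 1 := fun i =>
    hlam_mono 1 (by simp [Finset.mem_Icc]; omega) (i.1+1) (hmem i) (by omega)
  have hz_sub : ∀ (t : ℝ) (i : Fin n),
      (x₁ : ℂ) + t * Complex.I - lamC i
        = ((x₁ - lam (i.1+1) : ℝ) : ℂ) + (t : ℝ) * Complex.I := by
    intro t i
    simp only [hlamC]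
    push_cast
    ring
  have habs : ∀ (t : ℝ) (i : Fin n), ‖(x₁ : ℂ) + t * Complex.I - lamC i‖
      = Real.sqrt ((x₁ - lam (i.1+1)) ^ 2 + t ^ 2) := by
    intro t i
    rw [hz_sub, Complex.norm_add_mul_I]
  have hgap : ∀ i : Fin n, a ≤ x₁ - lam (i.1+1) := by
    intro i; have := hlam_le i; simp only [ha_def]; linarith
  have hsum_le : ∀ (t : ℝ) (i : Fin n), a ^ 2 + t ^ 2 ≤ (x₁ - lam (i.1+1)) ^ 2 + t ^ 2 := by
    intro t i
    have h1 := hgap i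
    nlinarith [ha]
  have hz_ne : ∀ (t : ℝ) (i : Fin n), (x₁ : ℂ) + t * Complex.I - lamC i ≠ 0 := by
    intro t i
    rw [← norm_ne_zero_iff, habs]
    have : (0:ℝ) < (x₁ - lam (i.1+1)) ^ 2 + t ^ 2 := by nlinarith [hgap i, sq_nonneg t, ha]
    positivity
  have hsq_pos : ∀ t : ℝ, (0:ℝ) < a ^ 2 + t ^ 2 := by
    intro t; positivity
  have hgnorm : ∀ (t : ℝ) (i : Fin n),
      ‖((x₁ : ℂ) + t * Complex.I - lamC i)⁻¹‖ ≤ (Real.sqrt (a ^ 2 + t ^ 2))⁻¹ := by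
    intro t i
    rw [norm_inv, habs]
    have h1 : (0:ℝ) < Real.sqrt (a ^ 2 + t ^ 2) := Real.sqrt_pos.mpr (hsq_pos t)
    exact inv_anti₀ h1 (Real.sqrt_le_sqrt (hsum_le t i))
  have hres_norm : ∀ t : ℝ, ‖res A ((x₁ : ℂ) + t * Complex.I)‖
      ≤ (Real.sqrt (a ^ 2 + t ^ 2))⁻¹ := by
    intro t
    rw [hresolv _ (hz_ne t)]
    have hD := l2norm_diagonal_le (fun i => ((x₁ : ℂ) + t * Complex.I - lamC i)⁻¹)
      (inv_nonneg.mpr (Real.sqrt_nonneg _)) (hgnorm t)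
    calc ‖Uc * Matrix.diagonal (fun i => ((x₁:ℂ) + t*Complex.I - lamC i)⁻¹) * Ucᵀ‖
        ≤ ‖Uc * Matrix.diagonal (fun i => ((x₁:ℂ) + t*Complex.I - lamC i)⁻¹)‖ * ‖Ucᵀ‖ :=
          Matrix.l2_opNorm_mul _ _
      _ ≤ ‖Uc‖ * ‖Matrix.diagonal (fun i => ((x₁:ℂ) + t*Complex.I - lamC i)⁻¹)‖ * ‖Ucᵀ‖ :=
          mul_le_mul_of_nonneg_right (Matrix.l2_opNorm_mul _ _) (norm_nonneg _)
      _ = ‖Matrix.diagonal (fun i => ((x₁:ℂ) + t*Complex.I - lamC i)⁻¹)‖ := by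
          rw [hnormUc, hnormUcT]; ring
      _ ≤ _ := hD
  have key : ∀ t : ℝ, specNorm
      (res A (x₁ + t * Complex.I) * E.map Complex.ofReal * res A (x₁ + t * Complex.I))
      ≤ specNorm E * (a ^ 2 + t ^ 2)⁻¹ := by
    intro t
    rw [specNorm_eq, specNorm_eq]
    set R := res A ((x₁ : ℂ) + t * Complex.I) with hR
    set Ec := E.map Complex.ofReal with hEc
    set c : ℝ := (Real.sqrt (a ^ 2 + t ^ 2))⁻¹ with hc
    have hc0 : 0 ≤ c := inv_nonneg.mpr (Real.sqrt_nonneg _)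
    have hRn : ‖R‖ ≤ c := hres_norm t
    have hEn : ‖Ec‖ ≤ ‖E‖ := l2norm_map_ofReal_le E
    calc ‖R * Ec * R‖ ≤ ‖R * Ec‖ * ‖R‖ := Matrix.l2_opNorm_mul _ _
      _ ≤ ‖R‖ * ‖Ec‖ * ‖R‖ :=
          mul_le_mul_of_nonneg_right (Matrix.l2_opNorm_mul _ _) (norm_nonneg _)
      _ ≤ c * ‖Ec‖ * ‖R‖ :=
          mul_le_mul_of_nonneg_right
            (mul_le_mul_of_nonneg_right hRn (norm_nonneg _)) (norm_nonneg _)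
      _ ≤ c * ‖E‖ * ‖R‖ :=
          mul_le_mul_of_nonneg_right
            (mul_le_mul_of_nonneg_left hEn hc0) (norm_nonneg _)
      _ ≤ c * ‖E‖ * c := by
          apply mul_le_mul_of_nonneg_left hRn
          exact mul_nonneg hc0 (norm_nonneg _)
      _ = ‖E‖ * (c * c) := by ring
      _ = ‖E‖ * (a ^ 2 + t ^ 2)⁻¹ := by
          rw [hc, ← mul_inv, Real.mul_self_sqrt (le_of_lt (hsq_pos t))]
  -- continuity and integrability
  have hcontD : Continuous fun t : ℝ =>
      (Matrix.diagonal (fun i => ((x₁:ℂ) + t*Complex.I - lamC i)⁻¹)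
        : Matrix (Fin n) (Fin n) ℂ) := by
    apply Continuous.matrix_diagonal
    apply continuous_pi
    intro i
    apply Continuous.inv₀
    · exact (continuous_const.add (Complex.continuous_ofReal.mul continuous_const)).sub
        continuous_const
    · exact fun t => hz_ne t i
  have hcontM : Continuous fun t : ℝ =>
      (Uc * Matrix.diagonal (fun i => ((x₁:ℂ) + t*Complex.I - lamC i)⁻¹) * Ucᵀ
        * E.map Complex.ofReal
        * (Uc * Matrix.diagonal (fun i => ((x₁:ℂ) + t*Complex.I - lamC i)⁻¹) * Ucᵀ)) := by
    exact ((((continuous_const.matrix_mul hcontD).matrix_mul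
      continuous_const).matrix_mul continuous_const).matrix_mul
      (((continuous_const.matrix_mul hcontD).matrix_mul continuous_const)))
  have hcont : Continuous fun t : ℝ => specNorm
      (res A (x₁ + t * Complex.I) * E.map Complex.ofReal * res A (x₁ + t * Complex.I)) := by
    have hfun : (fun t : ℝ => specNorm
        (res A (x₁ + t * Complex.I) * E.map Complex.ofReal * res A (x₁ + t * Complex.I)))
        = fun t : ℝ => specNorm
          (Uc * Matrix.diagonal (fun i => ((x₁:ℂ) + t*Complex.I - lamC i)⁻¹) * Ucᵀ
            * E.map Complex.ofReal
            * (Uc * Matrix.diagonal (fun i => ((x₁:ℂ) + t*Complex.I - lamC i)⁻¹) * Ucᵀ)) := by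
      funext t
      rw [hresolv _ (hz_ne t)]
    rw [hfun]
    let φ : Matrix (Fin n) (Fin n) ℂ →ₗ[ℂ]
        (EuclideanSpace ℂ (Fin n) →L[ℂ] EuclideanSpace ℂ (Fin n)) :=
      (Matrix.toEuclideanLin.trans LinearMap.toContinuousLinearMap).toLinearMap
    have hφ : Continuous φ := φ.continuous_of_finiteDimensional
    exact (hφ.comp hcontM).norm
  have hInt1 : IntervalIntegrable (fun t : ℝ => specNorm
      (res A (x₁ + t * Complex.I) * E.map Complex.ofReal * res A (x₁ + t * Complex.I)))
      MeasureTheory.volume (-T) T := hcont.intervalIntegrable _ _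
  have hcont2 : Continuous fun t : ℝ => specNorm E * (a ^ 2 + t ^ 2)⁻¹ := by
    apply continuous_const.mul
    apply Continuous.inv₀
    · exact continuous_const.add (continuous_id.pow 2)
    · exact fun t => ne_of_gt (hsq_pos t)
  have hInt2 : IntervalIntegrable (fun t : ℝ => specNorm E * (a ^ 2 + t ^ 2)⁻¹)
      MeasureTheory.volume (-T) T := hcont2.intervalIntegrable _ _
  have hmono := intervalIntegral.integral_mono_on (by linarith : -T ≤ T) hInt1 hInt2
    (fun x _ => key x)
  refine le_trans hmono ?_
  -- compute the integral
  have hIval : (∫ t in (-T)..T, (a ^ 2 + t ^ 2)⁻¹)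
      = a⁻¹ * (Real.arctan (T / a) - Real.arctan (-T / a)) := by
    have h1 : ∀ t : ℝ, (a ^ 2 + t ^ 2)⁻¹
        = a⁻¹ * a⁻¹ * (fun s : ℝ => (1 + s ^ 2)⁻¹) (t / a) := by
      intro t
      simp only
      rw [div_pow]
      field_simp
    have h2 : (∫ t in (-T)..T, (a ^ 2 + t ^ 2)⁻¹)
        = a⁻¹ * a⁻¹ * ∫ t in (-T)..T, (fun s : ℝ => (1 + s ^ 2)⁻¹) (t / a) := by
      rw [← intervalIntegral.integral_const_mul]
      apply intervalIntegral.integral_congr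
      intro t _
      exact h1 t
    rw [h2, intervalIntegral.integral_comp_div (fun s : ℝ => (1 + s ^ 2)⁻¹) (ne_of_gt ha),
      integral_inv_one_add_sq]
    simp only [smul_eq_mul]
    field_simp
  rw [intervalIntegral.integral_const_mul, hIval, specNorm_eq]
  have harc : Real.arctan (T / a) - Real.arctan (-T / a) ≤ Real.pi := by
    have h1 := Real.arctan_lt_pi_div_two (T / a)
    have h2 := Real.neg_pi_div_two_lt_arctan (-T / a)
    linarith
  have hE0 : (0:ℝ) ≤ ‖E‖ := norm_nonneg _
  have hpi := Real.pi_le_four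
  rw [div_eq_mul_inv, ha_def] at *
  calc ‖E‖ * ((x₁ - lam 1)⁻¹ * (Real.arctan (T / (x₁ - lam 1))
        - Real.arctan (-T / (x₁ - lam 1))))
      ≤ ‖E‖ * ((x₁ - lam 1)⁻¹ * Real.pi) := by
        apply mul_le_mul_of_nonneg_left _ hE0
        apply mul_le_mul_of_nonneg_left harc
        exact inv_nonneg.mpr (le_of_lt ha)
    _ ≤ 4 * ‖E‖ * (x₁ - lam 1)⁻¹ := by
        have hainv : (0:ℝ) ≤ (x₁ - lam 1)⁻¹ := inv_nonneg.mpr (le_of_lt ha)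
        nlinarith [mul_nonneg hE0 hainv]
end

section
/- Let 1 ≤ p < n and assume δ_p := λ_p − λ_{p+1} > 0. Then F₁ ≤ 2‖E‖/δ_p. -/
open Matrix Complex
open scoped InnerProductSpace

lemma specNorm_nonneg {𝕜 : Type*} [RCLike 𝕜] {m n : ℕ} (M : Matrix (Fin m) (Fin n) 𝕜) :
    0 ≤ specNorm M := norm_nonneg _

lemma mulVec_norm_le {𝕜 : Type*} [RCLike 𝕜] {m n : ℕ} (M : Matrix (Fin m) (Fin n) 𝕜)
    (x : EuclideanSpace 𝕜 (Fin n)) :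
    ‖Matrix.toEuclideanLin M x‖ ≤ specNorm M * ‖x‖ := by
  simpa [specNorm] using (LinearMap.toContinuousLinearMap (Matrix.toEuclideanLin M)).le_opNorm x

lemma specNorm_le_bound {𝕜 : Type*} [RCLike 𝕜] {m n : ℕ} (M : Matrix (Fin m) (Fin n) 𝕜)
    {c : ℝ} (hc : 0 ≤ c) (h : ∀ x : EuclideanSpace 𝕜 (Fin n), ‖Matrix.toEuclideanLin M x‖ ≤ c * ‖x‖) :
    specNorm M ≤ c := by
  refine ContinuousLinearMap.opNorm_le_bound _ hc ?_
  simpa using h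

lemma det_ne_zero_of_lower {n : ℕ} {B : Matrix (Fin n) (Fin n) ℂ} {d : ℝ} (hd : 0 < d)
    (h : ∀ w : EuclideanSpace ℂ (Fin n), d * ‖w‖ ≤ ‖toEuclideanLin B w‖) : B.det ≠ 0 := by
  intro hdet
  obtain ⟨v, hv0, hv⟩ := (Matrix.exists_mulVec_eq_zero_iff).mpr hdet
  set w : EuclideanSpace ℂ (Fin n) := (WithLp.equiv 2 (Fin n → ℂ)).symm v with hwdef
  have h0 : toEuclideanLin B w = 0 := by
    rw [hwdef]
    simp [Matrix.toEuclideanLin_apply, hv]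
  have h2 := h w
  rw [h0, norm_zero] at h2
  have hw0 : ‖w‖ = 0 := by nlinarith [norm_nonneg w]
  apply hv0
  have : w = 0 := norm_eq_zero.mp hw0
  have := congrArg (WithLp.equiv 2 (Fin n → ℂ)) this
  simpa [hwdef] using this

lemma res_norm_le {n : ℕ} (A : Matrix (Fin n) (Fin n) ℝ) (z : ℂ) {d : ℝ} (hd : 0 < d)
    (h : ∀ w : EuclideanSpace ℂ (Fin n),
      d * ‖w‖ ≤ ‖toEuclideanLin (z • (1 : Matrix (Fin n) (Fin n) ℂ) - A.map Complex.ofReal) w‖) :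
    specNorm (res A z) ≤ 1 / d := by
  set B : Matrix (Fin n) (Fin n) ℂ := z • (1 : Matrix (Fin n) (Fin n) ℂ) - A.map Complex.ofReal
    with hBdef
  have hdet : B.det ≠ 0 := det_ne_zero_of_lower hd h
  have hres : res A z = B⁻¹ := rfl
  rw [hres]
  refine specNorm_le_bound _ (by positivity) fun x => ?_
  have hBB : B * B⁻¹ = 1 := Matrix.mul_nonsing_inv B (isUnit_iff_ne_zero.mpr hdet)
  set y := toEuclideanLin B⁻¹ x with hy
  have hxy : toEuclideanLin B y = x := by
    have h1 : toEuclideanLin B (toEuclideanLin B⁻¹ x) = toEuclideanLin (B * B⁻¹) x := by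
      simp [Matrix.toEuclideanLin_apply, Matrix.mulVec_mulVec]
    rw [hy, h1, hBB]
    simp [Matrix.toEuclideanLin_apply]
  have h2 := h y
  rw [hxy] at h2
  rw [div_mul_eq_mul_div, le_div_iff₀ hd, mul_comm]
  linarith

lemma specNorm_map_le {n : ℕ} (E : Matrix (Fin n) (Fin n) ℝ) :
    specNorm (E.map Complex.ofReal) ≤ specNorm E := by
  refine specNorm_le_bound _ (specNorm_nonneg E) fun x => ?_
  set a : EuclideanSpace ℝ (Fin n) := (WithLp.equiv 2 (Fin n → ℝ)).symm (fun k => (x k).re)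
    with ha
  set b : EuclideanSpace ℝ (Fin n) := (WithLp.equiv 2 (Fin n → ℝ)).symm (fun k => (x k).im)
    with hb
  have hsqR : ∀ y : EuclideanSpace ℝ (Fin n), ‖y‖^2 = ∑ k, (y k)^2 := by
    intro y
    rw [EuclideanSpace.norm_eq, Real.sq_sqrt (by positivity)]
    refine Finset.sum_congr rfl fun k _ => ?_
    rw [Real.norm_eq_abs, _root_.sq_abs]
  have hsqC : ∀ y : EuclideanSpace ℂ (Fin n), ‖y‖^2 = ∑ k, ((y k).re^2 + (y k).im^2) := by
    intro y
    rw [EuclideanSpace.norm_eq, Real.sq_sqrt (by positivity)]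
    refine Finset.sum_congr rfl fun k _ => ?_
    rw [Complex.sq_norm, Complex.normSq_apply]
    ring
  have hre : ∀ k, (toEuclideanLin (E.map Complex.ofReal) x k).re = toEuclideanLin E a k := by
    intro k
    simp only [Matrix.toEuclideanLin_apply, WithLp.equiv_symm_apply, PiLp.toLp_apply, WithLp.ofLp_toLp, Matrix.mulVec,
      dotProduct, Matrix.map_apply, ha]
    rw [Complex.re_sum]
    refine Finset.sum_congr rfl fun j _ => ?_
    simp [Complex.mul_re]
  have him : ∀ k, (toEuclideanLin (E.map Complex.ofReal) x k).im = toEuclideanLin E b k := by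
    intro k
    simp only [Matrix.toEuclideanLin_apply, WithLp.equiv_symm_apply, PiLp.toLp_apply, WithLp.ofLp_toLp, Matrix.mulVec,
      dotProduct, Matrix.map_apply, hb]
    rw [Complex.im_sum]
    refine Finset.sum_congr rfl fun j _ => ?_
    simp [Complex.mul_im]
  have key : ‖toEuclideanLin (E.map Complex.ofReal) x‖^2
      = ‖toEuclideanLin E a‖^2 + ‖toEuclideanLin E b‖^2 := by
    rw [hsqC, hsqR, hsqR, ← Finset.sum_add_distrib]
    refine Finset.sum_congr rfl fun k _ => ?_
    rw [hre k, him k]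
  have hx : ‖x‖^2 = ‖a‖^2 + ‖b‖^2 := by
    rw [hsqC, hsqR, hsqR, ← Finset.sum_add_distrib]
    refine Finset.sum_congr rfl fun k _ => ?_
    simp [ha, hb, WithLp.equiv_symm_apply, PiLp.toLp_apply]
  have hA := mulVec_norm_le E a
  have hB := mulVec_norm_le E b
  have hc := specNorm_nonneg E
  have hA2 : ‖toEuclideanLin E a‖^2 ≤ specNorm E^2 * ‖a‖^2 := by
    nlinarith [norm_nonneg (toEuclideanLin E a), mul_nonneg hc (norm_nonneg a)]
  have hB2 : ‖toEuclideanLin E b‖^2 ≤ specNorm E^2 * ‖b‖^2 := by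
    nlinarith [norm_nonneg (toEuclideanLin E b), mul_nonneg hc (norm_nonneg b)]
  have hx2 : (specNorm E * ‖x‖)^2 = specNorm E^2 * ‖a‖^2 + specNorm E^2 * ‖b‖^2 := by
    rw [mul_pow, hx]; ring
  have h1 : ‖toEuclideanLin (E.map Complex.ofReal) x‖^2 ≤ (specNorm E * ‖x‖)^2 := by
    rw [hx2]; linarith [key, hA2, hB2]
  nlinarith [h1, norm_nonneg (toEuclideanLin (E.map Complex.ofReal) x),
    mul_nonneg hc (norm_nonneg x),
    sq_nonneg (‖toEuclideanLin (E.map Complex.ofReal) x‖ - specNorm E * ‖x‖)]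

lemma abs_lam_le {n : ℕ} (A : Matrix (Fin n) (Fin n) ℝ) (lam : ℕ → ℝ) (u : ℕ → (Fin n → ℝ))
    (hu_on : ∀ i ∈ Finset.Icc 1 n, ∀ j ∈ Finset.Icc 1 n, u i ⬝ᵥ u j = if i = j then 1 else 0)
    (hu_eig : ∀ i ∈ Finset.Icc 1 n, A *ᵥ u i = lam i • u i)
    {i : ℕ} (hi : i ∈ Finset.Icc 1 n) : |lam i| ≤ specNorm A := by
  set w : EuclideanSpace ℝ (Fin n) := (WithLp.equiv 2 (Fin n → ℝ)).symm (u i) with hw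
  have hdot := hu_on i hi i hi
  rw [if_pos rfl] at hdot
  simp only [dotProduct] at hdot
  have hnw : ‖w‖ = 1 := by
    have h2 : ‖w‖^2 = 1 := by
      rw [hw, EuclideanSpace.norm_eq, Real.sq_sqrt (by positivity)]
      calc ∑ k, ‖(WithLp.equiv 2 (Fin n → ℝ)).symm (u i) k‖^2
          = ∑ k, u i k * u i k := by
            refine Finset.sum_congr rfl fun k _ => ?_
            rw [WithLp.equiv_symm_apply, PiLp.toLp_apply, Real.norm_eq_abs, _root_.sq_abs, sq]
        _ = 1 := hdot
    nlinarith [norm_nonneg w]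
  have heq : toEuclideanLin A w = (WithLp.equiv 2 (Fin n → ℝ)).symm (lam i • u i) := by
    rw [hw]
    simp only [Matrix.toEuclideanLin_apply, Equiv.apply_symm_apply, WithLp.equiv_symm_apply, WithLp.ofLp_toLp]
    rw [hu_eig i hi]
  have hsm : ((WithLp.equiv 2 (Fin n → ℝ)).symm (lam i • u i) : EuclideanSpace ℝ (Fin n))
      = lam i • w := by
    rw [hw, WithLp.equiv_symm_apply, WithLp.toLp_smul]
  have hnorm : ‖toEuclideanLin A w‖ = |lam i| := by
    rw [heq, hsm, norm_smul, hnw, Real.norm_eq_abs, mul_one]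
  have hle := mulVec_norm_le A w
  rw [hnorm, hnw, mul_one] at hle
  exact hle


lemma specNorm_mul_le {𝕜 : Type*} [RCLike 𝕜] {n : ℕ} (M N : Matrix (Fin n) (Fin n) 𝕜) :
    specNorm (M * N) ≤ specNorm M * specNorm N := by
  refine specNorm_le_bound _ (mul_nonneg (specNorm_nonneg M) (specNorm_nonneg N)) fun x => ?_
  have h1 : Matrix.toEuclideanLin (M * N) x = Matrix.toEuclideanLin M (Matrix.toEuclideanLin N x) := by
    simp [Matrix.toEuclideanLin_apply, Matrix.mulVec_mulVec]
  rw [h1]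
  calc ‖Matrix.toEuclideanLin M (Matrix.toEuclideanLin N x)‖
      ≤ specNorm M * ‖Matrix.toEuclideanLin N x‖ := mulVec_norm_le _ _
    _ ≤ specNorm M * (specNorm N * ‖x‖) := by
        exact mul_le_mul_of_nonneg_left (mulVec_norm_le _ _) (specNorm_nonneg M)
    _ = specNorm M * specNorm N * ‖x‖ := by ring


lemma norm_sum_sq {n : ℕ} {v : Fin n → EuclideanSpace ℂ (Fin n)} (hv : Orthonormal ℂ v)
    (l : Fin n → ℂ) : ‖∑ i, l i • v i‖ ^ 2 = ∑ i, ‖l i‖ ^ 2 := by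
  have h := hv.inner_sum l l Finset.univ
  have h2 : ‖∑ i, l i • v i‖ ^ 2 = Complex.re ⟪∑ i, l i • v i, ∑ i, l i • v i⟫_ℂ := by
    rw [← inner_self_eq_norm_sq (𝕜 := ℂ)]; rfl
  rw [h2, h, Complex.re_sum]
  refine Finset.sum_congr rfl fun i _ => ?_
  rw [mul_comm, Complex.mul_conj]
  simp [Complex.sq_norm]

lemma key_lower {n : ℕ} (hn : 0 < n) (A : Matrix (Fin n) (Fin n) ℝ)
    (lam : ℕ → ℝ) (u : ℕ → (Fin n → ℝ))
    (hu_on : ∀ i ∈ Finset.Icc 1 n, ∀ j ∈ Finset.Icc 1 n, u i ⬝ᵥ u j = if i = j then 1 else 0)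
    (hu_eig : ∀ i ∈ Finset.Icc 1 n, A *ᵥ u i = lam i • u i)
    (z : ℂ) {d : ℝ} (hd0 : 0 ≤ d)
    (hd : ∀ i ∈ Finset.Icc 1 n, d ≤ ‖z - (lam i : ℂ)‖) :
    ∀ w : EuclideanSpace ℂ (Fin n),
      d * ‖w‖ ≤ ‖toEuclideanLin (z • (1 : Matrix (Fin n) (Fin n) ℂ) - A.map Complex.ofReal) w‖ := by
  intro w
  set B : Matrix (Fin n) (Fin n) ℂ := z • (1 : Matrix (Fin n) (Fin n) ℂ) - A.map Complex.ofReal with hB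
  set v : Fin n → EuclideanSpace ℂ (Fin n) :=
    fun i => (WithLp.equiv 2 (Fin n → ℂ)).symm (fun k => ((u (i.1 + 1) k : ℝ) : ℂ)) with hv
  have mem : ∀ i : Fin n, i.1 + 1 ∈ Finset.Icc 1 n := by
    intro i; simp only [Finset.mem_Icc]; omega
  have hon : Orthonormal ℂ v := by
    rw [orthonormal_iff_ite]
    intro i j
    have h := hu_on _ (mem i) _ (mem j)
    have : ⟪v i, v j⟫_ℂ = ((u (i.1+1) ⬝ᵥ u (j.1+1) : ℝ) : ℂ) := by
      simp only [hv, PiLp.inner_apply, RCLike.inner_apply, WithLp.equiv_symm_apply, PiLp.toLp_apply,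
        Complex.conj_ofReal, dotProduct]
      push_cast
      exact Finset.sum_congr rfl fun _ _ => mul_comm _ _
    rw [this, h]
    by_cases hij : i = j
    · simp [hij]
    · have h2 : ¬(i.1 + 1 = j.1 + 1) := by simpa [Fin.ext_iff] using hij
      simp [hij, h2]
      exact fun h => hij (Fin.ext h)
  have : Nonempty (Fin n) := ⟨⟨0, hn⟩⟩
  have card : Fintype.card (Fin n) = Module.finrank ℂ (EuclideanSpace ℂ (Fin n)) := by simp
  have hsp : ⊤ ≤ Submodule.span ℂ (Set.range v) := by
    rw [← coe_basisOfOrthonormalOfCardEqFinrank hon card]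
    exact (basisOfOrthonormalOfCardEqFinrank hon card).span_eq.ge
  set b := OrthonormalBasis.mk hon hsp with hb
  have hbc : ⇑b = v := OrthonormalBasis.coe_mk hon hsp
  have hBv : ∀ i : Fin n, toEuclideanLin B (v i) = (z - (lam (i.1+1) : ℂ)) • v i := by
    intro i
    have heig := hu_eig _ (mem i)
    have hfn : B *ᵥ (fun k => ((u (i.1+1) k : ℝ) : ℂ)) =
        (z - (lam (i.1+1) : ℂ)) • (fun k => ((u (i.1+1) k : ℝ) : ℂ)) := by
      funext k
      have hk := congrFun heig k
      simp only [Matrix.mulVec, dotProduct, Pi.smul_apply, smul_eq_mul] at hk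
      simp only [hB, Matrix.sub_mulVec, Matrix.smul_mulVec, Matrix.one_mulVec,
        Pi.smul_apply, Pi.sub_apply, smul_eq_mul]
      have : (A.map Complex.ofReal *ᵥ fun k => ((u (i.1+1) k : ℝ) : ℂ)) k
          = ((lam (i.1+1) : ℝ) : ℂ) * ((u (i.1+1) k : ℝ) : ℂ) := by
        simp only [Matrix.mulVec, dotProduct, Matrix.map_apply]
        push_cast
        exact_mod_cast congrArg Complex.ofReal hk
      rw [this]; ring
    calc toEuclideanLin B (v i)
        = (WithLp.equiv 2 (Fin n → ℂ)).symm (B *ᵥ fun k => ((u (i.1+1) k : ℝ) : ℂ)) := by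
          simp [hv, Matrix.toEuclideanLin_apply]
      _ = (WithLp.equiv 2 (Fin n → ℂ)).symm ((z - (lam (i.1+1) : ℂ)) • fun k => ((u (i.1+1) k : ℝ) : ℂ)) := by
          rw [hfn]
      _ = (z - (lam (i.1+1) : ℂ)) • v i := by
          simp [hv]
  set c : Fin n → ℂ := fun i => b.repr w i with hc
  have hw : ∑ i, c i • v i = w := by
    have := b.sum_repr w
    rwa [hbc] at this
  have hBw : toEuclideanLin B w = ∑ i, ((z - (lam (i.1+1) : ℂ)) * c i) • v i := by
    rw [← hw, map_sum]
    refine Finset.sum_congr rfl fun i _ => ?_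
    rw [LinearMap.map_smul, hBv i, smul_smul, mul_comm]
  have h1 : ‖toEuclideanLin B w‖^2 = ∑ i, ‖(z - (lam (i.1+1) : ℂ)) * c i‖^2 := by
    rw [hBw, norm_sum_sq hon]
  have h2 : ‖w‖^2 = ∑ i, ‖c i‖^2 := by rw [← hw, norm_sum_sq hon]
  have h3 : d^2 * ‖w‖^2 ≤ ‖toEuclideanLin B w‖^2 := by
    rw [h1, h2, Finset.mul_sum]
    refine Finset.sum_le_sum fun i _ => ?_
    rw [norm_mul, mul_pow]
    have hdi := hd _ (mem i)
    have hsq : d^2 ≤ ‖z - (lam (i.1+1) : ℂ)‖^2 := by nlinarith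
    exact mul_le_mul_of_nonneg_right hsq (sq_nonneg _)
  nlinarith [h3, norm_nonneg (toEuclideanLin B w), mul_nonneg hd0 (norm_nonneg w),
    sq_nonneg (d * ‖w‖ - ‖toEuclideanLin B w‖)]


lemma cont_specNorm {n : ℕ} : Continuous fun M : Matrix (Fin n) (Fin n) ℂ => specNorm M := by
  have hL : Continuous fun M : Matrix (Fin n) (Fin n) ℂ =>
      LinearMap.toContinuousLinearMap (Matrix.toEuclideanLin M) := by
    exact LinearMap.continuous_of_finiteDimensional
      (f := ((LinearMap.toContinuousLinearMap :
          (EuclideanSpace ℂ (Fin n) →ₗ[ℂ] EuclideanSpace ℂ (Fin n)) ≃ₗ[ℂ]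
          (EuclideanSpace ℂ (Fin n) →L[ℂ] EuclideanSpace ℂ (Fin n))).toLinearMap.comp
        (Matrix.toEuclideanLin :
          Matrix (Fin n) (Fin n) ℂ ≃ₗ[ℂ] _).toLinearMap))
  exact hL.norm

lemma contOn_res {n : ℕ} (A : Matrix (Fin n) (Fin n) ℝ) {s : Set ℝ} (f : ℝ → ℂ)
    (hf : Continuous f)
    (hdet : ∀ t ∈ s,
      ((f t) • (1 : Matrix (Fin n) (Fin n) ℂ) - A.map Complex.ofReal).det ≠ 0) :
    ContinuousOn (fun t => res A (f t)) s := by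
  have hg : Continuous fun t => (f t) • (1 : Matrix (Fin n) (Fin n) ℂ) - A.map Complex.ofReal :=
    (hf.smul continuous_const).sub continuous_const
  have hdet' : ContinuousOn
      (fun t => (((f t) • (1 : Matrix (Fin n) (Fin n) ℂ) - A.map Complex.ofReal).det)⁻¹) s :=
    (hg.matrix_det.continuousOn).inv₀ hdet
  have hmain : ContinuousOn (fun t =>
      ((((f t) • (1 : Matrix (Fin n) (Fin n) ℂ) - A.map Complex.ofReal).det)⁻¹
        • ((f t) • (1 : Matrix (Fin n) (Fin n) ℂ) - A.map Complex.ofReal).adjugate)) s :=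
    hdet'.smul hg.matrix_adjugate.continuousOn
  have : ∀ t, res A (f t)
      = (((f t) • (1 : Matrix (Fin n) (Fin n) ℂ) - A.map Complex.ofReal).det)⁻¹
        • ((f t) • (1 : Matrix (Fin n) (Fin n) ℂ) - A.map Complex.ofReal).adjugate := by
    intro t
    rw [res, Matrix.inv_def, Ring.inverse_eq_inv']
  simpa only [this] using hmain

lemma contOn_integrand {n : ℕ} (A Em : Matrix (Fin n) (Fin n) ℝ) {s : Set ℝ} (f : ℝ → ℂ)
    (hf : Continuous f)
    (hdet : ∀ t ∈ s,
      ((f t) • (1 : Matrix (Fin n) (Fin n) ℂ) - A.map Complex.ofReal).det ≠ 0) :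
    ContinuousOn
      (fun t => specNorm (res A (f t) * Em.map Complex.ofReal * res A (f t))) s := by
  have h1 := contOn_res A f hf hdet
  have h2 : ContinuousOn (fun t => res A (f t) * Em.map Complex.ofReal * res A (f t)) s :=
    (h1.mul continuousOn_const).mul h1
  exact cont_specNorm.comp_continuousOn h2


lemma hasDeriv_inv_quad {a : ℝ} (ha : 0 < a) (t : ℝ) :
    HasDerivAt (fun t : ℝ => a⁻¹ * Real.arctan (t / a)) ((a^2 + t^2)⁻¹) t := by
  have h1 : HasDerivAt (fun t : ℝ => t / a) a⁻¹ t := by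
    simpa [one_div] using (hasDerivAt_id t).div_const a
  have h2 := (Real.hasDerivAt_arctan (t / a)).comp t h1
  have h3 : HasDerivAt (fun t : ℝ => a⁻¹ * Real.arctan (t / a))
      (a⁻¹ * (1 / (1 + (t / a) ^ 2) * a⁻¹)) t := h2.const_mul a⁻¹
  convert h3 using 1
  have ha2 : (1 + (t/a)^2) ≠ 0 := by positivity
  field_simp

lemma integral_inv_quad {a : ℝ} (ha : 0 < a) (T : ℝ) :
    ∫ t in (-T)..T, (a^2 + t^2)⁻¹ = 2 / a * Real.arctan (T / a) := by
  have hcont : Continuous fun t : ℝ => (a^2 + t^2)⁻¹ := by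
    refine Continuous.inv₀ (by continuity) fun t => by positivity
  rw [intervalIntegral.integral_eq_sub_of_hasDerivAt (fun t _ => hasDeriv_inv_quad ha t)
    (hcont.intervalIntegrable _ _)]
  rw [neg_div, Real.arctan_neg]
  ring

lemma arctan_lower {s : ℝ} (hs : 0 ≤ s) : s / (1 + s^2) ≤ Real.arctan s := by
  have h1 : Real.arctan s - Real.arctan 0 = ∫ x in (0:ℝ)..s, (1 + x^2)⁻¹ :=
    (integral_inv_one_add_sq).symm
  rw [Real.arctan_zero, sub_zero] at h1
  rw [h1]
  have h2 : ∫ x in (0:ℝ)..s, (1 + s^2)⁻¹ ≤ ∫ x in (0:ℝ)..s, (1 + x^2)⁻¹ := by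
    refine intervalIntegral.integral_mono_on hs (intervalIntegrable_const) ?_ ?_
    · exact (Continuous.inv₀ (by continuity) fun t => by positivity).intervalIntegrable _ _
    · intro x hx
      rw [Set.mem_Icc] at hx
      have : x^2 ≤ s^2 := by nlinarith [hx.1, hx.2]
      have h0 : (0:ℝ) < 1 + x^2 := by positivity
      have h0' : (0:ℝ) < 1 + s^2 := by positivity
      exact inv_anti₀ h0 (by linarith)
  calc s / (1 + s^2) = ∫ x in (0:ℝ)..s, (1 + s^2)⁻¹ := by
        rw [intervalIntegral.integral_const, smul_eq_mul, sub_zero, div_eq_mul_inv]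
    _ ≤ _ := h2


set_option maxHeartbeats 2000000 in
/-- **Crude bound `F₁ ≤ 2‖E‖/δ_p`** (Remark 4.4 of the paper). Indices are
1-based; `x₀ = λ_p − δ_p/2`, `x₁ = T = 2σ₁` with `σ₁ = ‖A‖`. -/
theorem F1_crude_bound
    {n : ℕ} (A E : Matrix (Fin n) (Fin n) ℝ) (hA : A.IsSymm) (hE : E.IsSymm)
    (lam : ℕ → ℝ)
    (hlam_mono : ∀ i ∈ Finset.Icc 1 n, ∀ j ∈ Finset.Icc 1 n, i ≤ j → lam j ≤ lam i)
    (u : ℕ → (Fin n → ℝ))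
    (hu_on : ∀ i ∈ Finset.Icc 1 n, ∀ j ∈ Finset.Icc 1 n,
      u i ⬝ᵥ u j = if i = j then 1 else 0)
    (hu_eig : ∀ i ∈ Finset.Icc 1 n, A *ᵥ u i = lam i • u i)
    (p : ℕ) (hp1 : 1 ≤ p) (hpn : p < n)
    (δp : ℝ) (hδp : δp = lam p - lam (p + 1)) (hδp_pos : 0 < δp)
    (x₀ x₁ T : ℝ) (hx₀ : x₀ = lam p - δp / 2)
    (hx₁ : x₁ = 2 * specNorm A) (hT : T = 2 * specNorm A)
    (M1 M2 M3 M4 F1 : ℝ)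
    (hM1 : M1 = ∫ t in (-T)..T, specNorm
      (res A (x₀ + t * Complex.I) * E.map Complex.ofReal
        * res A (x₀ + t * Complex.I)))
    (hM2 : M2 = ∫ x in x₀..x₁, specNorm
      (res A (x + T * Complex.I) * E.map Complex.ofReal
        * res A (x + T * Complex.I)))
    (hM3 : M3 = ∫ t in (-T)..T, specNorm
      (res A (x₁ + t * Complex.I) * E.map Complex.ofReal
        * res A (x₁ + t * Complex.I)))
    (hM4 : M4 = ∫ x in x₀..x₁, specNorm
      (res A (x - T * Complex.I) * E.map Complex.ofReal
        * res A (x - T * Complex.I)))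
    (hF1 : F1 = 1 / (2 * Real.pi) * (M1 + M2 + M3 + M4)) :
    F1 ≤ 2 * specNorm E / δp := by
  have hn : 0 < n := lt_of_le_of_lt (Nat.zero_le p) hpn
  set σ := specNorm A with hσ
  set cE := specNorm E with hcEdef
  have hpmem : p ∈ Finset.Icc 1 n := by rw [Finset.mem_Icc]; omega
  have hp1mem : p + 1 ∈ Finset.Icc 1 n := by rw [Finset.mem_Icc]; omega
  have hlam_bd : ∀ i ∈ Finset.Icc 1 n, |lam i| ≤ σ :=
    fun i hi => abs_lam_le A lam u hu_on hu_eig hi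
  have hlp := abs_le.mp (hlam_bd p hpmem)
  have hlp1 := abs_le.mp (hlam_bd (p+1) hp1mem)
  have hδ2σ : δp ≤ 2 * σ := by rw [hδp]; linarith [hlp.1, hlp.2, hlp1.1, hlp1.2]
  have hσpos : 0 < σ := by linarith
  have hcE0 : 0 ≤ cE := specNorm_nonneg E
  have hπ := Real.pi_pos
  -- combined resolvent bound helper
  have hbnd : ∀ (z : ℂ) (d : ℝ), 0 < d → (∀ i ∈ Finset.Icc 1 n, d ≤ ‖z - (lam i : ℂ)‖) →
      specNorm (res A z * E.map Complex.ofReal * res A z) ≤ cE / d^2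
        ∧ (z • (1 : Matrix (Fin n) (Fin n) ℂ) - A.map Complex.ofReal).det ≠ 0 := by
    intro z d hd hdist
    have hkey := key_lower hn A lam u hu_on hu_eig z hd.le hdist
    have h1 := res_norm_le A z hd hkey
    have hdet := det_ne_zero_of_lower hd hkey
    refine ⟨?_, hdet⟩
    have hE' := specNorm_map_le E
    have r0 : 0 ≤ specNorm (res A z) := specNorm_nonneg _
    have e0 : 0 ≤ specNorm (E.map Complex.ofReal) := specNorm_nonneg _
    calc specNorm (res A z * E.map Complex.ofReal * res A z)
        ≤ specNorm (res A z * E.map Complex.ofReal) * specNorm (res A z) := specNorm_mul_le _ _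
      _ ≤ (specNorm (res A z) * specNorm (E.map Complex.ofReal)) * specNorm (res A z) := by
          exact mul_le_mul_of_nonneg_right (specNorm_mul_le _ _) r0
      _ ≤ ((1/d) * cE) * (1/d) := by
          apply mul_le_mul (mul_le_mul h1 hE' e0 (by positivity)) h1 r0 (by positivity)
      _ = cE / d^2 := by
          have hdne : d ≠ 0 := ne_of_gt hd
          rw [div_eq_mul_inv]
          ring
  -- auxiliary positivity facts
  have hδne : δp ≠ 0 := ne_of_gt hδp_pos
  have hσne : σ ≠ 0 := ne_of_gt hσpos
  have hδ2 : (0:ℝ) < δp/2 := by linarith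
  have hTpos : 0 < T := by rw [hT]; linarith
  ---------------- M1 ----------------
  have hdist1 : ∀ (t : ℝ), ∀ i ∈ Finset.Icc 1 n,
      Real.sqrt ((δp/2)^2 + t^2) ≤ ‖(x₀ : ℂ) + (t:ℂ) * Complex.I - (lam i : ℂ)‖ := by
    intro t i hi
    have hre : δp/2 ≤ |x₀ - lam i| := by
      rcases le_or_gt i p with hip | hip
      · have hmono := hlam_mono i hi p hpmem hip
        rw [abs_sub_comm]
        calc δp/2 = lam p - x₀ := by rw [hx₀]; ring
          _ ≤ lam i - x₀ := by linarith
          _ ≤ |lam i - x₀| := le_abs_self _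
      · have hmono := hlam_mono (p+1) hp1mem i hi hip
        calc δp/2 = x₀ - lam (p+1) := by rw [hx₀, hδp]; ring
          _ ≤ x₀ - lam i := by linarith
          _ ≤ |x₀ - lam i| := le_abs_self _
    have hrecomp : ((x₀ : ℂ) + (t:ℂ) * Complex.I - (lam i : ℂ)).re = x₀ - lam i := by simp
    have himcomp : ((x₀ : ℂ) + (t:ℂ) * Complex.I - (lam i : ℂ)).im = t := by simp
    rw [Complex.norm_def, Complex.normSq_apply, hrecomp, himcomp]
    apply Real.sqrt_le_sqrt
    have h2 := mul_le_mul hre hre hδ2.le (abs_nonneg (x₀ - lam i))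
    rw [abs_mul_abs_self] at h2
    nlinarith [h2]
  have hq1pos : ∀ t : ℝ, (0:ℝ) < (δp/2)^2 + t^2 := fun t => by positivity
  have hb1 : ∀ t ∈ Set.Icc (-T) T,
      specNorm (res A ((x₀:ℂ) + (t:ℂ)*Complex.I) * E.map Complex.ofReal
        * res A ((x₀:ℂ) + (t:ℂ)*Complex.I)) ≤ cE * ((δp/2)^2 + t^2)⁻¹ := by
    intro t _
    have hdpos : 0 < Real.sqrt ((δp/2)^2 + t^2) := Real.sqrt_pos.mpr (hq1pos t)
    have h := (hbnd _ _ hdpos (hdist1 t)).1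
    rwa [Real.sq_sqrt (hq1pos t).le, div_eq_mul_inv] at h
  have hdet1 : ∀ t ∈ Set.uIcc (-T) T,
      (((x₀:ℂ) + (t:ℂ)*Complex.I) • (1 : Matrix (Fin n) (Fin n) ℂ)
        - A.map Complex.ofReal).det ≠ 0 := fun t _ =>
    (hbnd _ _ (Real.sqrt_pos.mpr (hq1pos t)) (hdist1 t)).2
  have hcont1 : Continuous fun t : ℝ => (x₀:ℂ) + (t:ℂ)*Complex.I :=
    continuous_const.add (Complex.continuous_ofReal.mul continuous_const)
  have hint1 : IntervalIntegrable (fun t => specNorm (res A ((x₀:ℂ) + (t:ℂ)*Complex.I)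
      * E.map Complex.ofReal * res A ((x₀:ℂ) + (t:ℂ)*Complex.I)))
      MeasureTheory.volume (-T) T :=
    (contOn_integrand A E _ hcont1 hdet1).intervalIntegrable
  have hqc1 : Continuous fun t : ℝ => cE * ((δp/2)^2 + t^2)⁻¹ :=
    continuous_const.mul (Continuous.inv₀
      (continuous_const.add (continuous_pow 2)) fun t => (hq1pos t).ne')
  have hM1b : M1 ≤ cE * (2*Real.pi/δp - 4/(5*σ)) := by
    have harct : Real.arctan (T/(δp/2)) ≤ Real.pi/2 - δp/(5*σ) := by
      have hTv : T/(δp/2) = (δp/(4*σ))⁻¹ := by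
        rw [hT, inv_div, div_eq_div_iff (by positivity) (by positivity)]
        ring
      rw [hTv, Real.arctan_inv_of_pos (by positivity)]
      have hlow := arctan_lower (s := δp/(4*σ)) (by positivity)
      have hs₀le : δp/(4*σ) ≤ 1/2 := by rw [div_le_iff₀ (by positivity)]; linarith
      have h1s : 1 + (δp/(4*σ))^2 ≤ 5/4 := by
        nlinarith [div_nonneg hδp_pos.le (by positivity : (0:ℝ) ≤ 4*σ)]
      have hmid : δp/(5*σ) ≤ (δp/(4*σ))/(1+(δp/(4*σ))^2) := by
        have heq : δp/(5*σ) = (δp/(4*σ))/(5/4) := by field_simp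
        rw [heq]
        exact div_le_div_of_nonneg_left (by positivity) (by positivity) h1s
      linarith
    rw [hM1]
    calc (∫ t in (-T)..T, specNorm (res A ((x₀:ℂ) + (t:ℂ)*Complex.I)
          * E.map Complex.ofReal * res A ((x₀:ℂ) + (t:ℂ)*Complex.I)))
        ≤ ∫ t in (-T)..T, cE * ((δp/2)^2 + t^2)⁻¹ :=
          intervalIntegral.integral_mono_on (by linarith) hint1
            (hqc1.intervalIntegrable _ _) hb1
      _ = cE * (2/(δp/2) * Real.arctan (T/(δp/2))) := by
          rw [intervalIntegral.integral_const_mul, integral_inv_quad hδ2]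
      _ ≤ cE * (2/(δp/2) * (Real.pi/2 - δp/(5*σ))) :=
          mul_le_mul_of_nonneg_left (mul_le_mul_of_nonneg_left harct (by positivity)) hcE0
      _ = cE * (2*Real.pi/δp - 4/(5*σ)) := by
          congr 1
          field_simp
          ring
  ---------------- M3 ----------------
  have hdist3 : ∀ (t : ℝ), ∀ i ∈ Finset.Icc 1 n,
      Real.sqrt (σ^2 + t^2) ≤ ‖(x₁ : ℂ) + (t:ℂ) * Complex.I - (lam i : ℂ)‖ := by
    intro t i hi
    have hre : σ ≤ |x₁ - lam i| := by
      have hli := abs_le.mp (hlam_bd i hi)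
      calc σ ≤ x₁ - lam i := by rw [hx₁]; linarith [hli.2]
        _ ≤ |x₁ - lam i| := le_abs_self _
    have hrecomp : ((x₁ : ℂ) + (t:ℂ) * Complex.I - (lam i : ℂ)).re = x₁ - lam i := by simp
    have himcomp : ((x₁ : ℂ) + (t:ℂ) * Complex.I - (lam i : ℂ)).im = t := by simp
    rw [Complex.norm_def, Complex.normSq_apply, hrecomp, himcomp]
    apply Real.sqrt_le_sqrt
    have h2 := mul_le_mul hre hre hσpos.le (abs_nonneg (x₁ - lam i))
    rw [abs_mul_abs_self] at h2
    nlinarith [h2]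
  have hq3pos : ∀ t : ℝ, (0:ℝ) < σ^2 + t^2 := fun t => by positivity
  have hb3 : ∀ t ∈ Set.Icc (-T) T,
      specNorm (res A ((x₁:ℂ) + (t:ℂ)*Complex.I) * E.map Complex.ofReal
        * res A ((x₁:ℂ) + (t:ℂ)*Complex.I)) ≤ cE * (σ^2 + t^2)⁻¹ := by
    intro t _
    have hdpos : 0 < Real.sqrt (σ^2 + t^2) := Real.sqrt_pos.mpr (hq3pos t)
    have h := (hbnd _ _ hdpos (hdist3 t)).1
    rwa [Real.sq_sqrt (hq3pos t).le, div_eq_mul_inv] at h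
  have hdet3 : ∀ t ∈ Set.uIcc (-T) T,
      (((x₁:ℂ) + (t:ℂ)*Complex.I) • (1 : Matrix (Fin n) (Fin n) ℂ)
        - A.map Complex.ofReal).det ≠ 0 := fun t _ =>
    (hbnd _ _ (Real.sqrt_pos.mpr (hq3pos t)) (hdist3 t)).2
  have hcont3 : Continuous fun t : ℝ => (x₁:ℂ) + (t:ℂ)*Complex.I :=
    continuous_const.add (Complex.continuous_ofReal.mul continuous_const)
  have hint3 : IntervalIntegrable (fun t => specNorm (res A ((x₁:ℂ) + (t:ℂ)*Complex.I)
      * E.map Complex.ofReal * res A ((x₁:ℂ) + (t:ℂ)*Complex.I)))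
      MeasureTheory.volume (-T) T :=
    (contOn_integrand A E _ hcont3 hdet3).intervalIntegrable
  have hqc3 : Continuous fun t : ℝ => cE * (σ^2 + t^2)⁻¹ :=
    continuous_const.mul (Continuous.inv₀
      (continuous_const.add (continuous_pow 2)) fun t => (hq3pos t).ne')
  have hM3b : M3 ≤ cE * (Real.pi/σ - 4/(5*σ)) := by
    have harct : Real.arctan (T/σ) ≤ Real.pi/2 - 2/5 := by
      have hTv : T/σ = (2:ℝ) := by rw [hT]; field_simp
      have hinv : Real.arctan (2:ℝ)⁻¹ = Real.pi/2 - Real.arctan 2 :=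
        Real.arctan_inv_of_pos (by norm_num)
      have hlow := arctan_lower (s := ((2:ℝ))⁻¹) (by norm_num)
      have hval : ((2:ℝ)⁻¹) / (1 + ((2:ℝ)⁻¹)^2) = 2/5 := by norm_num
      rw [hTv]
      rw [hval] at hlow
      linarith
    rw [hM3]
    calc (∫ t in (-T)..T, specNorm (res A ((x₁:ℂ) + (t:ℂ)*Complex.I)
          * E.map Complex.ofReal * res A ((x₁:ℂ) + (t:ℂ)*Complex.I)))
        ≤ ∫ t in (-T)..T, cE * (σ^2 + t^2)⁻¹ :=
          intervalIntegral.integral_mono_on (by linarith) hint3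
            (hqc3.intervalIntegrable _ _) hb3
      _ = cE * (2/σ * Real.arctan (T/σ)) := by
          rw [intervalIntegral.integral_const_mul, integral_inv_quad hσpos]
      _ ≤ cE * (2/σ * (Real.pi/2 - 2/5)) :=
          mul_le_mul_of_nonneg_left (mul_le_mul_of_nonneg_left harct (by positivity)) hcE0
      _ = cE * (Real.pi/σ - 4/(5*σ)) := by
          congr 1
          field_simp
          ring
  ---------------- M2 ----------------
  have hx01 : x₀ ≤ x₁ := by rw [hx₀, hx₁]; linarith [hlp.2]
  have hdist2 : ∀ (x : ℝ), ∀ i ∈ Finset.Icc 1 n,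
      2*σ ≤ ‖(x : ℂ) + (T:ℂ) * Complex.I - (lam i : ℂ)‖ := by
    intro x i hi
    have him : ((x : ℂ) + (T:ℂ) * Complex.I - (lam i : ℂ)).im = T := by simp
    calc 2*σ = T := hT.symm
      _ ≤ |T| := le_abs_self T
      _ = |((x : ℂ) + (T:ℂ) * Complex.I - (lam i : ℂ)).im| := by rw [him]
      _ ≤ ‖(x : ℂ) + (T:ℂ) * Complex.I - (lam i : ℂ)‖ :=
          Complex.abs_im_le_norm _
  have hb2 : ∀ x ∈ Set.Icc x₀ x₁,
      specNorm (res A ((x:ℂ) + (T:ℂ)*Complex.I) * E.map Complex.ofReal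
        * res A ((x:ℂ) + (T:ℂ)*Complex.I)) ≤ cE / (2*σ)^2 := by
    intro x _
    exact (hbnd _ _ (by positivity) (hdist2 x)).1
  have hdet2 : ∀ x ∈ Set.uIcc x₀ x₁,
      (((x:ℂ) + (T:ℂ)*Complex.I) • (1 : Matrix (Fin n) (Fin n) ℂ)
        - A.map Complex.ofReal).det ≠ 0 := fun x _ =>
    (hbnd _ _ (by positivity : (0:ℝ) < 2*σ) (hdist2 x)).2
  have hcont2 : Continuous fun x : ℝ => (x:ℂ) + (T:ℂ)*Complex.I :=
    (Complex.continuous_ofReal).add continuous_const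
  have hint2 : IntervalIntegrable (fun x => specNorm (res A ((x:ℂ) + (T:ℂ)*Complex.I)
      * E.map Complex.ofReal * res A ((x:ℂ) + (T:ℂ)*Complex.I)))
      MeasureTheory.volume x₀ x₁ := by
    have hc := contOn_integrand A E (fun x : ℝ => (x:ℂ) + (T:ℂ)*Complex.I) ?_ hdet2
    · exact hc.intervalIntegrable
    · exact hcont2
  have hlen : x₁ - x₀ ≤ 3*σ - δp/2 := by
    rw [hx₁, hx₀]
    have h1 : -σ ≤ lam (p+1) := hlp1.1
    have h2 : lam p = δp + lam (p+1) := by rw [hδp]; ring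
    linarith
  have hM2b : M2 ≤ cE * ((3*σ - δp/2)/(4*σ^2)) := by
    rw [hM2]
    calc (∫ x in x₀..x₁, specNorm (res A ((x:ℂ) + (T:ℂ)*Complex.I)
          * E.map Complex.ofReal * res A ((x:ℂ) + (T:ℂ)*Complex.I)))
        ≤ ∫ _x in x₀..x₁, cE / (2*σ)^2 :=
          intervalIntegral.integral_mono_on hx01 hint2 intervalIntegrable_const hb2
      _ = (x₁ - x₀) * (cE / (2*σ)^2) := by
          rw [intervalIntegral.integral_const, smul_eq_mul]
      _ ≤ (3*σ - δp/2) * (cE / (2*σ)^2) :=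
          mul_le_mul_of_nonneg_right hlen (by positivity)
      _ = cE * ((3*σ - δp/2)/(4*σ^2)) := by
          field_simp
          ring
  ---------------- M4 ----------------
  have hdist4 : ∀ (x : ℝ), ∀ i ∈ Finset.Icc 1 n,
      2*σ ≤ ‖(x : ℂ) - (T:ℂ) * Complex.I - (lam i : ℂ)‖ := by
    intro x i hi
    have him : ((x : ℂ) - (T:ℂ) * Complex.I - (lam i : ℂ)).im = -T := by simp
    calc 2*σ = T := hT.symm
      _ ≤ |(-T)| := by rw [abs_neg]; exact le_abs_self T
      _ = |((x : ℂ) - (T:ℂ) * Complex.I - (lam i : ℂ)).im| := by rw [him]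
      _ ≤ ‖(x : ℂ) - (T:ℂ) * Complex.I - (lam i : ℂ)‖ :=
          Complex.abs_im_le_norm _
  have hb4 : ∀ x ∈ Set.Icc x₀ x₁,
      specNorm (res A ((x:ℂ) - (T:ℂ)*Complex.I) * E.map Complex.ofReal
        * res A ((x:ℂ) - (T:ℂ)*Complex.I)) ≤ cE / (2*σ)^2 := by
    intro x _
    exact (hbnd _ _ (by positivity) (hdist4 x)).1
  have hdet4 : ∀ x ∈ Set.uIcc x₀ x₁,
      (((x:ℂ) - (T:ℂ)*Complex.I) • (1 : Matrix (Fin n) (Fin n) ℂ)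
        - A.map Complex.ofReal).det ≠ 0 := fun x _ =>
    (hbnd _ _ (by positivity : (0:ℝ) < 2*σ) (hdist4 x)).2
  have hcont4 : Continuous fun x : ℝ => (x:ℂ) - (T:ℂ)*Complex.I :=
    (Complex.continuous_ofReal).sub continuous_const
  have hint4 : IntervalIntegrable (fun x => specNorm (res A ((x:ℂ) - (T:ℂ)*Complex.I)
      * E.map Complex.ofReal * res A ((x:ℂ) - (T:ℂ)*Complex.I)))
      MeasureTheory.volume x₀ x₁ := by
    have hc := contOn_integrand A E (fun x : ℝ => (x:ℂ) - (T:ℂ)*Complex.I) ?_ hdet4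
    · exact hc.intervalIntegrable
    · exact hcont4
  have hM4b : M4 ≤ cE * ((3*σ - δp/2)/(4*σ^2)) := by
    rw [hM4]
    calc (∫ x in x₀..x₁, specNorm (res A ((x:ℂ) - (T:ℂ)*Complex.I)
          * E.map Complex.ofReal * res A ((x:ℂ) - (T:ℂ)*Complex.I)))
        ≤ ∫ _x in x₀..x₁, cE / (2*σ)^2 :=
          intervalIntegral.integral_mono_on hx01 hint4 intervalIntegrable_const hb4
      _ = (x₁ - x₀) * (cE / (2*σ)^2) := by
          rw [intervalIntegral.integral_const, smul_eq_mul]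
      _ ≤ (3*σ - δp/2) * (cE / (2*σ)^2) :=
          mul_le_mul_of_nonneg_right hlen (by positivity)
      _ = cE * ((3*σ - δp/2)/(4*σ^2)) := by
          field_simp
          ring
  ---------------- conclusion ----------------
  have h1s : Real.pi/σ ≤ 2*Real.pi/δp := by
    rw [div_le_div_iff₀ hσpos hδp_pos]; nlinarith
  have h2s : (3*σ - δp/2)/(4*σ^2) ≤ 3/(4*σ) := by
    rw [div_le_div_iff₀ (by positivity) (by positivity)]; nlinarith
  have h3s : 3/(4*σ) + 3/(4*σ) ≤ 8/(5*σ) := by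
    have he : 3/(4*σ) + 3/(4*σ) = 6/(4*σ) := by ring
    rw [he, div_le_div_iff₀ (by positivity) (by positivity)]; nlinarith
  have hsum : M1 + M2 + M3 + M4 ≤ cE * (4*Real.pi/δp) := by
    have hscal : (2*Real.pi/δp - 4/(5*σ)) + (3*σ-δp/2)/(4*σ^2)
        + (Real.pi/σ - 4/(5*σ)) + (3*σ-δp/2)/(4*σ^2) ≤ 4*Real.pi/δp := by
      have h4s : 2*Real.pi/δp + 2*Real.pi/δp = 4*Real.pi/δp := by ring
      have e1 : 4/(5*σ) + 4/(5*σ) = 8/(5*σ) := by ring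
      linarith
    calc M1 + M2 + M3 + M4
        ≤ cE*(2*Real.pi/δp - 4/(5*σ)) + cE*((3*σ-δp/2)/(4*σ^2))
          + cE*(Real.pi/σ - 4/(5*σ)) + cE*((3*σ-δp/2)/(4*σ^2)) := by linarith
      _ = cE * ((2*Real.pi/δp - 4/(5*σ)) + (3*σ-δp/2)/(4*σ^2)
          + (Real.pi/σ - 4/(5*σ)) + (3*σ-δp/2)/(4*σ^2)) := by ring
      _ ≤ cE * (4*Real.pi/δp) := mul_le_mul_of_nonneg_left hscal hcE0
  rw [hF1]
  calc 1/(2*Real.pi) * (M1 + M2 + M3 + M4)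
      ≤ 1/(2*Real.pi) * (cE * (4*Real.pi/δp)) :=
        mul_le_mul_of_nonneg_left hsum (by positivity)
    _ = 2*cE/δp := by
        field_simp
        ring
end
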